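/- Let d ≥ 2 and r ≥ 1. The subgraph of the grid graph ℤ^d induced on the ℓ∞-sphere S^∞_r is 2-connected: it has at least 3 vertices, it is connected, and for every vertex w ∈ S^∞_r the subgraph induced on S^∞_r \ {w} is still connected. -/

import Mathlib

/-- The `ℓ1`-norm of a point of `ℤ^d`. -/
def norm1 {d : ℕ} (x : Fin d → ℤ) : ℤ := ∑ i, |x i|

/-- Grid adjacency in `ℤ^d`: `u` and `v` are adjacent iff `‖u - v‖₁ = 1`. -/
def Adj {d : ℕ} (u v : Fin d → ℤ) : Prop := norm1 (u - v) = 1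

/-- The `ℓ∞`-sphere `S^∞_r = {v : ‖v‖_∞ = r}` in `ℤ^d`. -/
def Sinf (d : ℕ) (r : ℤ) : Set (Fin d → ℤ) := {x | (∀ i, |x i| ≤ r) ∧ ∃ i, |x i| = r}

/-- The set `A` is connected in the grid graph: any two of its points are joined
by a path all of whose vertices lie in `A`. -/
def ConnectedIn {d : ℕ} (A : Set (Fin d → ℤ)) : Prop :=
  ∀ a ∈ A, ∀ b ∈ A,
    ∃ (L : List (Fin d → ℤ)) (h : L ≠ []),
      L.Nodup ∧ L.Chain' Adj ∧ (∀ x ∈ L, x ∈ A) ∧ L.head h = a ∧ L.getLast h = b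

def RA {d : ℕ} (A : Set (Fin d → ℤ)) (x y : Fin d → ℤ) : Prop :=
  x ∈ A ∧ y ∈ A ∧ Adj x y

lemma adj_symm {d : ℕ} {u v : Fin d → ℤ} (h : Adj u v) : Adj v u := by
  unfold Adj norm1 at *
  have : ∀ i, |(v - u) i| = |(u - v) i| := by
    intro i; simp [Pi.sub_apply, abs_sub_comm]
  rw [Finset.sum_congr rfl (fun i _ => this i)]; exact h

lemma RA_symm {d : ℕ} {A : Set (Fin d → ℤ)} : Symmetric (RA A) :=
  fun _ _ h => ⟨h.2.1, h.1, adj_symm h.2.2⟩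

lemma adj_update {d : ℕ} (x : Fin d → ℤ) (i : Fin d) (e : ℤ) (he : e = 1 ∨ e = -1) :
    Adj x (Function.update x i (x i + e)) := by
  unfold Adj norm1
  have h1 : ∀ k, |(x - Function.update x i (x i + e)) k| = if k = i then |e| else 0 := by
    intro k
    by_cases hk : k = i
    · subst hk; simp [Pi.sub_apply, Function.update_self]
    · simp [Pi.sub_apply, Function.update_of_ne hk, hk]
  rw [Finset.sum_congr rfl (fun k _ => h1 k), Finset.sum_ite_eq']
  rcases he with h | h <;> simp [h]

lemma sweep {d : ℕ} (A : Set (Fin d → ℤ)) (i : Fin d) (c : ℤ) :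
    ∀ (n : ℕ) (x : Fin d → ℤ), (x i - c).natAbs = n →
    (∀ t, min (x i) c ≤ t → t ≤ max (x i) c → Function.update x i t ∈ A) →
    Relation.ReflTransGen (RA A) x (Function.update x i c) := by
  intro n
  induction n with
  | zero =>
    intro x h0 _
    have hx : x i = c := by omega
    rw [← hx, Function.update_eq_self]
  | succ n ih =>
    intro x hn hmem
    have hne : x i ≠ c := by omega
    set e : ℤ := if x i < c then 1 else -1 with he
    have hee : e = 1 ∨ e = -1 := by rw [he]; split <;> simp
    set y := Function.update x i (x i + e) with hy
    have hyi : y i = x i + e := by rw [hy, Function.update_self]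
    have hrange : min (x i) c ≤ x i + e ∧ x i + e ≤ max (x i) c := by
      rcases lt_or_gt_of_ne hne with h | h
      · have : e = 1 := by rw [he]; simp [h]
        constructor <;> [skip; skip] <;> omega
      · have : e = -1 := by rw [he]; simp [not_lt.mpr (le_of_lt h)]
        constructor <;> omega
    have hxA : x ∈ A := by
      have := hmem (x i) (min_le_left _ _) (le_max_left _ _)
      rwa [Function.update_eq_self] at this
    have hyA : y ∈ A := hmem _ hrange.1 hrange.2
    have hstep : RA A x y := ⟨hxA, hyA, adj_update x i e hee⟩
    have hn' : (y i - c).natAbs = n := by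
      rw [hyi]
      rcases lt_or_gt_of_ne hne with h | h
      · have : e = 1 := by rw [he]; simp [h]
        omega
      · have : e = -1 := by rw [he]; simp [not_lt.mpr (le_of_lt h)]
        omega
    have hmem' : ∀ t, min (y i) c ≤ t → t ≤ max (y i) c → Function.update y i t ∈ A := by
      intro t h1 h2
      rw [hy, Function.update_idem]
      apply hmem t
      · rw [hyi] at h1; omega
      · rw [hyi] at h2; omega
    have := ih y hn' hmem'
    have hfin : Function.update y i c = Function.update x i c := by
      rw [hy, Function.update_idem]
    exact Relation.ReflTransGen.head hstep (hfin ▸ this)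

lemma reach_corner {d : ℕ} (hd : 2 ≤ d) {r : ℤ} (hr : 1 ≤ r) (w x q : Fin d → ℤ)
    (hx : ∀ i, |x i| ≤ r) (j : Fin d) (hj : |x j| = r) (hq : ∀ i, |q i| = r)
    (i₀ : Fin d) (hav : w i₀ < min (x i₀) (q i₀) ∨ max (x i₀) (q i₀) < w i₀) :
    Relation.ReflTransGen (RA (Sinf d r \ {w})) x q := by
  set A := Sinf d r \ {w} with hA
  have hmemA : ∀ p : Fin d → ℤ,
      (∀ k, min (x k) (q k) ≤ p k ∧ p k ≤ max (x k) (q k)) →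
      (∃ j', |p j'| = r) → p ∈ A := by
    intro p hp hext
    have hbnd : ∀ k, |p k| ≤ r := by
      intro k
      have h1 := abs_le.mp (hx k)
      have h2 : -r ≤ q k ∧ q k ≤ r := abs_le.mp (le_of_eq (hq k))
      have := (hp k).1; have := (hp k).2
      rw [abs_le]; omega
    refine ⟨⟨hbnd, hext⟩, ?_⟩
    simp only [Set.mem_singleton_iff]
    intro hpw
    have := (hp i₀).1; have := (hp i₀).2
    rw [hpw] at *
    omega
  -- process all coordinates except pivot j
  have key : ∀ s : Finset (Fin d), j ∉ s →
      Relation.ReflTransGen (RA A) x (fun i => if i ∈ s then q i else x i) := by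
    intro s
    induction s using Finset.induction_on with
    | empty =>
      intro _
      have : (fun i => if i ∈ (∅ : Finset (Fin d)) then q i else x i) = x := by
        funext i; simp
      rw [this]
    | @insert a s hi ih =>
      intro hjs
      have hja : j ≠ a := fun h => hjs (by rw [h]; exact Finset.mem_insert_self a s)
      have hjs' : j ∉ s := fun h => hjs (Finset.mem_insert_of_mem h)
      set m : Fin d → ℤ := fun i => if i ∈ s then q i else x i with hm
      have hma : m a = x a := by rw [hm]; simp [hi]
      have hmj : m j = x j := by rw [hm]; simp [hjs']
      have hsweep := sweep A a (q a) (m a - q a).natAbs m rfl ?_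
      · have hfin : Function.update m a (q a) =
            (fun i => if i ∈ insert a s then q i else x i) := by
          funext k
          by_cases hk : k = a
          · subst hk; simp [Function.update_self]
          · rw [Function.update_of_ne hk, hm]
            simp only [Finset.mem_insert]
            by_cases hks : k ∈ s <;> simp [hks, hk]
        exact (ih hjs').trans (hfin ▸ hsweep)
      · intro t h1 h2
        apply hmemA
        · intro k
          by_cases hk : k = a
          · subst hk
            rw [Function.update_self, hma] at *
            exact ⟨h1, h2⟩
          · rw [Function.update_of_ne hk, hm]
            by_cases hks : k ∈ s
            · simp only [hks, if_true]
              exact ⟨min_le_right _ _, le_max_right _ _⟩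
            · simp only [hks, if_false]
              exact ⟨min_le_left _ _, le_max_left _ _⟩
        · refine ⟨j, ?_⟩
          rw [Function.update_of_ne hja, hmj]; exact hj
  -- now the pivot
  have hkey := key (Finset.univ.erase j) (Finset.notMem_erase j _)
  set y : Fin d → ℤ := fun i => if i ∈ Finset.univ.erase j then q i else x i with hy
  have hyj : y j = x j := by rw [hy]; simp
  have hyk : ∀ k, k ≠ j → y k = q k := by
    intro k hk; rw [hy]; simp [Finset.mem_erase, hk]
  -- a second index distinct from j
  obtain ⟨j2, hj2⟩ : ∃ j2 : Fin d, j2 ≠ j := by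
    by_cases h0 : (j : ℕ) = 0
    · exact ⟨⟨1, by omega⟩, by intro h; rw [Fin.ext_iff] at h; simp at h; omega⟩
    · exact ⟨⟨0, by omega⟩, by intro h; rw [Fin.ext_iff] at h; simp at h; omega⟩
  have hsweep2 := sweep A j (q j) (y j - q j).natAbs y rfl ?_
  · have hfin : Function.update y j (q j) = q := by
      funext k
      by_cases hk : k = j
      · subst hk; rw [Function.update_self]
      · rw [Function.update_of_ne hk, hyk k hk]
    exact hkey.trans (hfin ▸ hsweep2)
  · intro t h1 h2
    apply hmemA
    · intro k
      by_cases hk : k = j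
      · subst hk
        rw [Function.update_self]
        rw [hyj] at h1 h2
        exact ⟨h1, h2⟩
      · rw [Function.update_of_ne hk, hyk k hk]
        exact ⟨min_le_right _ _, le_max_right _ _⟩
    · refine ⟨j2, ?_⟩
      rw [Function.update_of_ne hj2, hyk j2 hj2]
      exact hq j2

lemma toPath {d : ℕ} {A : Set (Fin d → ℤ)} {a b : Fin d → ℤ}
    (h : Relation.ReflTransGen (RA A) a b) (ha : a ∈ A) :
    ∃ (L : List (Fin d → ℤ)) (h : L ≠ []),
      L.Nodup ∧ L.Chain' Adj ∧ (∀ x ∈ L, x ∈ A) ∧ L.head h = a ∧ L.getLast h = b := by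
  revert ha
  induction h using Relation.ReflTransGen.head_induction_on with
  | refl =>
    intro hb
    exact ⟨[b], by simp, by simp, by simp [List.Chain'], by simpa using hb, rfl, rfl⟩
  | head h' h'' ih =>
    rename_i a c
    intro haA
    obtain ⟨L, hne, nd, ch, mem, hhd, hlast⟩ := ih h'.2.1
    by_cases hmem : a ∈ L
    · obtain ⟨s, t, rfl⟩ := List.append_of_mem hmem
      have hsfx : (a :: t) <:+ (s ++ a :: t) := ⟨s, rfl⟩
      refine ⟨a :: t, by simp, nd.sublist hsfx.sublist, ?_, ?_, rfl, ?_⟩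
      · exact (List.isChain_append.mp ch).2.1
      · intro x hx; exact mem x (by simp [hx])
      · rw [← hlast, List.getLast_append]
        simp
    · refine ⟨a :: L, by simp, List.nodup_cons.mpr ⟨hmem, nd⟩, ?_, ?_, rfl, ?_⟩
      · show List.IsChain Adj (a :: L); rw [List.isChain_cons]
        refine ⟨?_, ch⟩
        intro y hy
        have hy' : y = L.head hne := by
          rw [List.head?_eq_head hne] at hy
          exact (Option.mem_some_iff.mp hy).symm
        rw [hy', hhd]
        exact h'.2.2
      · intro x hx
        rcases List.mem_cons.mp hx with h | h
        · rwa [h]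
        · exact mem x h
      · rw [List.getLast_cons hne]; exact hlast

lemma corner_hop {d : ℕ} (hd : 2 ≤ d) {r : ℤ} (hr : 1 ≤ r) (w u v : Fin d → ℤ)
    (hu : ∀ i, |u i| = r) (hv : ∀ i, |v i| = r) (i1 : Fin d)
    (heq : u i1 = v i1) (hne : w i1 ≠ u i1) :
    Relation.ReflTransGen (RA (Sinf d r \ {w})) u v := by
  apply reach_corner hd hr w u v (fun i => le_of_eq (hu i)) i1 (hu i1) hv i1
  rw [← heq, min_self, max_self]
  exact lt_or_gt_of_ne hne

lemma connected_del {d : ℕ} (hd : 2 ≤ d) {r : ℤ} (hr : 1 ≤ r) (w : Fin d → ℤ) :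
    ConnectedIn (Sinf d r \ {w}) := by
  set A := Sinf d r \ {w} with hA
  have habs_r : |r| = r := abs_of_pos (by omega)
  have habs_nr : |(-r)| = r := by rw [abs_neg]; exact habs_r
  -- a common target reachable from every point of A
  have main : ∃ T, ∀ x ∈ A, Relation.ReflTransGen (RA A) x T := by
    by_cases hbig : ∃ i, r < |w i|
    · -- w is outside the ball entirely
      obtain ⟨i1, hi1⟩ := hbig
      refine ⟨fun _ => r, ?_⟩
      rintro x ⟨⟨hxb, jx, hjx⟩, -⟩
      apply reach_corner hd hr w x _ hxb jx hjx (fun i => habs_r) i1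
      have hx1 := abs_le.mp (hxb i1)
      rcases lt_or_ge (w i1) 0 with h | h
      · left
        have hm : -r ≤ min (x i1) r := le_min hx1.1 (by omega)
        have : |w i1| = -(w i1) := abs_of_neg h
        omega
      · right
        have hm : max (x i1) r ≤ r := max_le hx1.2 le_rfl
        have : |w i1| = w i1 := abs_of_nonneg h
        omega
    · push_neg at hbig
      set Q : Fin d → ℤ := fun i => if w i = r then -r else r with hQdef
      have hQ : ∀ i, |Q i| = r := by
        intro i; rw [hQdef]; dsimp only; split <;> assumption
      refine ⟨Q, ?_⟩
      rintro x ⟨⟨hxb, jx, hjx⟩, hxw⟩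
      simp only [Set.mem_singleton_iff] at hxw
      obtain ⟨i₀, hi₀⟩ : ∃ i, x i ≠ w i := Function.ne_iff.mp hxw
      set u : Fin d → ℤ := fun i => if w i < x i then r else -r with hudef
      have hu : ∀ i, |u i| = r := by
        intro i; rw [hudef]; dsimp only; split <;> assumption
      have hxi₀ := abs_le.mp (hxb i₀)
      -- leg 1 : x to u
      have leg1 : Relation.ReflTransGen (RA A) x u := by
        apply reach_corner hd hr w x u hxb jx hjx hu i₀
        rw [hudef]; dsimp only
        rcases lt_or_gt_of_ne hi₀.symm with h | h
        · left; rw [if_pos h]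
          have : min (x i₀) r = x i₀ := min_eq_left hxi₀.2
          omega
        · right; rw [if_neg (by omega)]
          have : max (x i₀) (-r) = x i₀ := max_eq_left hxi₀.1
          omega
      have hui₀ : w i₀ ≠ u i₀ := by
        rw [hudef]; dsimp only
        rcases lt_or_gt_of_ne hi₀.symm with h | h
        · rw [if_pos h]; omega
        · rw [if_neg (by omega)]; omega
      -- route u to Q
      have leg2 : Relation.ReflTransGen (RA A) u Q := by
        by_cases hEq : ∃ i, u i = Q i
        · obtain ⟨i1, hi1⟩ := hEq
          apply corner_hop hd hr w u Q hu hQ i1 hi1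
          rw [hudef] at hi1 ⊢; rw [hQdef] at hi1; dsimp only at hi1 ⊢
          by_cases hw : w i1 = r
          · rw [if_pos hw] at hi1
            split <;> omega
          · rw [if_neg hw] at hi1
            split <;> omega
        · push_neg at hEq
          have hu_eq : ∀ i, u i = if w i = r then r else -r := by
            intro i
            have h1 := hu i
            have h3 := hEq i
            rw [hQdef] at h3; dsimp only at h3
            have h1' : u i = r ∨ u i = -r := (abs_eq (by omega : (0:ℤ) ≤ r)).mp h1
            by_cases hw : w i = r
            · rw [if_pos hw]; rw [if_pos hw] at h3; omega
            · rw [if_neg hw]; rw [if_neg hw] at h3; omega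
          by_cases hExt : ∃ i, |w i| = r
          · obtain ⟨i1, hi1⟩ := hExt
            set P : Fin d → ℤ := fun i => if w i = -r then r else -r with hPdef
            have hP : ∀ i, |P i| = r := by
              intro i; rw [hPdef]; dsimp only; split <;> assumption
            -- find a non-extreme coordinate of w
            obtain ⟨i₂, hi₂⟩ : ∃ i, |w i| ≠ r := by
              by_contra hcon
              push_neg at hcon
              apply hui₀
              have := hcon i₀
              rw [hu_eq i₀]
              rcases abs_eq (by omega : (0:ℤ) ≤ r) |>.mp (hcon i₀) with h | h
              · rw [if_pos h]; exact h
              · rw [if_neg (by omega), h]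
            have hi₂' : -r < w i₂ ∧ w i₂ < r := by
              have := hbig i₂
              have := abs_le.mp this
              rcases lt_or_ge (w i₂) 0 with h | h
              · have := abs_of_neg h; omega
              · have := abs_of_nonneg h; omega
            have hop1 : Relation.ReflTransGen (RA A) u P := by
              apply corner_hop hd hr w u P hu hP i₂
              · rw [hu_eq i₂, hPdef]; dsimp only
                rw [if_neg (by omega), if_neg (by omega)]
              · rw [hu_eq i₂, if_neg (by omega)]; omega
            have hop2 : Relation.ReflTransGen (RA A) P Q := by
              apply corner_hop hd hr w P Q hP hQ i1
              · rw [hPdef, hQdef]; dsimp only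
                rcases abs_eq (by omega : (0:ℤ) ≤ r) |>.mp hi1 with h | h
                · rw [if_neg (by omega), if_pos h]
                · rw [if_pos h, if_neg (by omega)]
              · rw [hPdef]; dsimp only
                rcases abs_eq (by omega : (0:ℤ) ≤ r) |>.mp hi1 with h | h
                · rw [if_neg (by omega)]; omega
                · rw [if_pos h]; omega
            exact hop1.trans hop2
          · -- w has no extreme coordinate at all
            push_neg at hExt
            have hw_lt : ∀ i, -r < w i ∧ w i < r := by
              intro i
              have h1 := hbig i
              have h2 := hExt i
              have := abs_le.mp h1
              rcases lt_or_ge (w i) 0 with h | h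
              · have := abs_of_neg h; omega
              · have := abs_of_nonneg h; omega
            set i1 : Fin d := ⟨0, by omega⟩ with hi1def
            set i2 : Fin d := ⟨1, by omega⟩ with hi2def
            have hne12 : i2 ≠ i1 := by
              rw [hi1def, hi2def]
              intro h
              rw [Fin.ext_iff] at h
              simp at h
            set M : Fin d → ℤ := fun i => if i = i1 then r else -r with hMdef
            have hM : ∀ i, |M i| = r := by
              intro i; rw [hMdef]; dsimp only; split <;> assumption
            have hQr : ∀ i, Q i = r := by
              intro i; rw [hQdef]; dsimp only
              rw [if_neg (by have := hw_lt i; omega)]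
            have hur : ∀ i, u i = -r := by
              intro i
              rw [hu_eq i, if_neg (by have := hw_lt i; omega)]
            have hop1 : Relation.ReflTransGen (RA A) u M := by
              apply corner_hop hd hr w u M hu hM i2
              · rw [hur i2, hMdef]; dsimp only
                rw [if_neg hne12]
              · rw [hur i2]; have := hw_lt i2; omega
            have hop2 : Relation.ReflTransGen (RA A) M Q := by
              apply corner_hop hd hr w M Q hM hQ i1
              · rw [hMdef, hQr i1]; dsimp only
                rw [if_pos rfl]
              · rw [hMdef]; dsimp only
                rw [if_pos rfl]; have := hw_lt i1; omega
            exact hop1.trans hop2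
      exact leg1.trans leg2
  -- assemble
  obtain ⟨T, hT⟩ := main
  intro a ha b hb
  have h1 := hT a ha
  have h2 := hT b hb
  exact toPath (h1.trans (haveI : Std.Symm (RA A) := ⟨fun _ _ h => RA_symm h⟩; Std.Symm.symm _ _ h2)) ha

theorem statement11 (d : ℕ) (hd : 2 ≤ d) (r : ℤ) (hr : 1 ≤ r) :
    (∃ a b c : Fin d → ℤ, a ∈ Sinf d r ∧ b ∈ Sinf d r ∧ c ∈ Sinf d r ∧
      a ≠ b ∧ a ≠ c ∧ b ≠ c) ∧
    ConnectedIn (Sinf d r) ∧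
    ∀ w ∈ Sinf d r, ConnectedIn (Sinf d r \ {w}) := by
  have habs_r : |r| = r := abs_of_pos (by omega)
  have habs_nr : |(-r)| = r := by rw [abs_neg]; exact habs_r
  have h01 : (⟨1, by omega⟩ : Fin d) ≠ ⟨0, by omega⟩ := by
    intro h; rw [Fin.ext_iff] at h; simp at h
  refine ⟨?_, ?_, ?_⟩
  · refine ⟨fun _ => r, fun _ => -r,
      fun i => if i = ⟨0, by omega⟩ then r else -r, ?_, ?_, ?_, ?_, ?_, ?_⟩
    · exact ⟨fun i => le_of_eq habs_r, ⟨0, by omega⟩, habs_r⟩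
    · exact ⟨fun i => le_of_eq habs_nr, ⟨0, by omega⟩, habs_nr⟩
    · refine ⟨fun i => ?_, ⟨0, by omega⟩, by dsimp only; rw [if_pos rfl]; exact habs_r⟩
      dsimp only; split
      · exact le_of_eq habs_r
      · exact le_of_eq habs_nr
    · intro h
      have := congrFun h ⟨0, by omega⟩
      omega
    · intro h
      have := congrFun h ⟨1, by omega⟩
      rw [if_neg h01] at this; omega
    · intro h
      have := congrFun h ⟨0, by omega⟩
      simp only at this
      simp at this; omega
  · have hw1 : (fun _ => r + 1 : Fin d → ℤ) ∉ Sinf d r := by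
      rintro ⟨hb, -⟩
      have := hb ⟨0, by omega⟩
      dsimp only at this
      rw [abs_of_pos (by omega)] at this
      omega
    have heq : Sinf d r \ {fun _ => r + 1} = Sinf d r :=
      Set.diff_singleton_eq_self hw1
    rw [← heq]
    exact connected_del hd hr _
  · intro w _
    exact connected_del hd hr w
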